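/- Let V be a real vector space of dimension 2m+1 (m ≥ 1), A a graded-commutative algebra, ω ∈ A_2 a nonzero element with ω^m ≠ 0, and f: V → A_1 ⊕ ℝ·y a linear map into the degree-1 part of the Tievsky algebra T = A ⊗ ℝ[y]/(y²). Suppose f extends to a morphism of graded algebras on the exterior algebra Λ*V, and suppose d f(v) (where d(β+ay)=aω) equals a sum of products f(v_r)·f(v_s) over fewer than 2m+1 fixed basis vectors v_r, v_s with r,s < l, for v = v_l with l ≤ 2m. Then the y-coefficient a_l of f(v_l) is zero. -/

import Mathlib

private lemma G1_sq {R : Type*} [Ring R] [Algebra ℝ R] {u : R}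
    (h : u * u = -(u * u)) : u * u = 0 := by
  have h2 : u * u + u * u = 0 := add_eq_zero_iff_eq_neg.mpr h
  calc u * u = (2⁻¹ : ℝ) • ((2 : ℝ) • (u * u)) := by rw [smul_smul]; norm_num
    _ = (2⁻¹ : ℝ) • (u * u + u * u) := by rw [two_smul]
    _ = 0 := by rw [h2, smul_zero]

private lemma mul_prod_eq_zero {R : Type*} [Ring R] [Algebra ℝ R] {G : Submodule ℝ R}
    (anticomm : ∀ a b : R, a ∈ G → b ∈ G → a * b = -(b * a)) :
    ∀ (M : List R), (∀ z ∈ M, z ∈ G) → ∀ u, u ∈ G → u ∈ M → u * M.prod = 0 := by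
  intro M
  induction M with
  | nil => intro _ u _ hu; simp at hu
  | cons z M ih =>
    intro hM u huG huM
    rcases List.mem_cons.mp huM with rfl | hu
    · rw [List.prod_cons, ← mul_assoc, G1_sq (anticomm u u huG huG), zero_mul]
    · have hz : z ∈ G := hM z (List.mem_cons_self)
      have hM' : ∀ w ∈ M, w ∈ G := fun w hw => hM w (List.mem_cons_of_mem _ hw)
      rw [List.prod_cons, ← mul_assoc, anticomm u z huG hz, neg_mul, mul_assoc,
        ih hM' u huG hu, mul_zero, neg_zero]

private lemma prod_eq_zero_of_not_nodup {R : Type*} [Ring R] [Algebra ℝ R] {G : Submodule ℝ R}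
    (anticomm : ∀ a b : R, a ∈ G → b ∈ G → a * b = -(b * a)) :
    ∀ (M : List R), (∀ z ∈ M, z ∈ G) → ¬ M.Nodup → M.prod = 0 := by
  intro M
  induction M with
  | nil => intro _ h; exact absurd List.nodup_nil h
  | cons z M ih =>
    intro hM hnd
    rw [List.prod_cons]
    by_cases hz : z ∈ M
    · exact mul_prod_eq_zero anticomm M (fun w hw => hM w (List.mem_cons_of_mem _ hw)) z
        (hM z (List.mem_cons_self)) hz
    · have hnd' : ¬ M.Nodup := fun h => hnd (List.nodup_cons.mpr ⟨hz, h⟩)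
      rw [ih (fun w hw => hM w (List.mem_cons_of_mem _ hw)) hnd', mul_zero]

theorem y_coefficient_vanishes
    (m : ℕ) (hm : 1 ≤ m)
    (R : Type*) [Ring R] [Algebra ℝ R]
    (G : ℕ → Submodule ℝ R)
    (anticomm : ∀ a b : R, a ∈ G 1 → b ∈ G 1 → a * b = -(b * a))
    (ω : R) (hω : ω ∈ G 2) (hωm : ω ^ m ≠ 0)
    (ωcomm : ∀ a : R, ω * a = a * ω)
    (y : R) (hy : y ∈ G 1) (hyy : y * y = 0)
    (V : Type*) [AddCommGroup V] [Module ℝ V]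
    (hdim : Module.finrank ℝ V = 2 * m + 1)
    (v : Module.Basis (Fin (2 * m + 1)) ℝ V)
    (β : Fin (2 * m + 1) → R) (hβ : ∀ i, β i ∈ G 1)
    (a : Fin (2 * m + 1) → ℝ)
    (f : Fin (2 * m + 1) → R) (hf : ∀ i, f i = β i + a i • y)
    (γ : Fin (2 * m + 1) → Fin (2 * m + 1) → ℝ)
    (l : Fin (2 * m + 1)) (hl : (l : ℕ) < 2 * m)
    (key : a l • ω =
      -∑ r : Fin (2 * m + 1), ∑ s : Fin (2 * m + 1),
        if r < s ∧ s < l then γ r s • (f r * f s) else 0) :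
    a l = 0 := by
  have hf1 : ∀ i, f i ∈ G 1 := fun i => by
    rw [hf]; exact add_mem (hβ i) (Submodule.smul_mem _ _ hy)
  set T : R := ∑ r : Fin (2 * m + 1), ∑ s : Fin (2 * m + 1),
      if r < s ∧ s < l then γ r s • (f r * f s) else 0 with hT
  -- the span family
  set P : ℕ → Submodule ℝ R := fun k => Submodule.span ℝ
      {x | ∃ L : List (Fin (2 * m + 1)), L.length = 2 * k ∧ L.Nodup ∧
        (∀ i ∈ L, i < l) ∧ x = (L.map f).prod} with hP
  have step : ∀ k, ∀ x ∈ P k, x * T ∈ P (k + 1) := by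
    intro k x hx
    induction hx using Submodule.span_induction with
    | mem x hxs =>
      obtain ⟨L, hlen, hnd, hlt, rfl⟩ := hxs
      rw [hT, Finset.mul_sum]
      refine Submodule.sum_mem _ fun r _ => ?_
      rw [Finset.mul_sum]
      refine Submodule.sum_mem _ fun s _ => ?_
      by_cases hrs : r < s ∧ s < l
      · rw [if_pos hrs, mul_smul_comm]
        refine Submodule.smul_mem _ _ ?_
        have hx : (L.map f).prod * (f r * f s) = ((L ++ [r, s]).map f).prod := by
          simp [List.prod_append, mul_assoc]
        rw [hx]
        by_cases hmem : r ∈ L ∨ s ∈ L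
        · have hnotnd : ¬ ((L ++ [r, s]).map f).Nodup := by
            intro h
            rw [List.map_append] at h
            have hdisj := List.disjoint_of_nodup_append h
            rcases hmem with hr | hs
            · exact hdisj (List.mem_map_of_mem (f := f) hr) (by simp)
            · exact hdisj (List.mem_map_of_mem (f := f) hs) (by simp)
          rw [prod_eq_zero_of_not_nodup anticomm _
            (fun z hz => by
              obtain ⟨i, _, rfl⟩ := List.mem_map.mp hz
              exact hf1 i) hnotnd]
          exact Submodule.zero_mem _
        · push_neg at hmem
          refine Submodule.subset_span ⟨L ++ [r, s], ?_, ?_, ?_, rfl⟩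
          · simp [hlen]; ring
          · refine List.Nodup.append hnd ?_ ?_
            · simp [ne_of_lt hrs.1]
            · intro i hi hi2
              simp at hi2
              rcases hi2 with rfl | rfl
              · exact hmem.1 hi
              · exact hmem.2 hi
          · intro i hi
            rcases List.mem_append.mp hi with h | h
            · exact hlt i h
            · simp at h
              rcases h with rfl | rfl
              · exact lt_trans hrs.1 hrs.2
              · exact hrs.2
      · rw [if_neg hrs, mul_zero]; exact Submodule.zero_mem _
    | zero => rw [zero_mul]; exact Submodule.zero_mem _
    | add x y _ _ hx hy => rw [add_mul]; exact Submodule.add_mem _ hx hy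
    | smul c x _ hx => rw [smul_mul_assoc]; exact Submodule.smul_mem _ _ hx
  have pow_mem : ∀ k, T ^ k ∈ P k := by
    intro k
    induction k with
    | zero =>
      refine Submodule.subset_span ⟨[], ?_, List.nodup_nil, ?_, ?_⟩ <;> simp
    | succ k ih =>
      rw [pow_succ]
      exact step k _ ih
  have hPm : P m ≤ ⊥ := by
    rw [hP]
    refine Submodule.span_le.mpr ?_
    rintro x ⟨L, hlen, hnd, hlt, rfl⟩
    exfalso
    have hndv : (L.map Fin.val).Nodup := hnd.map Fin.val_injective
    have hsub : (L.map Fin.val).toFinset ⊆ Finset.range (l : ℕ) := by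
      intro i hi
      rw [List.mem_toFinset] at hi
      obtain ⟨j, hj, rfl⟩ := List.mem_map.mp hi
      exact Finset.mem_range.mpr (hlt j hj)
    have hcard : (L.map Fin.val).toFinset.card = 2 * m := by
      rw [List.toFinset_card_of_nodup hndv, List.length_map, hlen]
    have := Finset.card_le_card hsub
    rw [hcard, Finset.card_range] at this
    omega
  have hTm : T ^ m = 0 := by
    have := hPm (pow_mem m)
    simpa using this
  have hzero : (a l) ^ m • ω ^ m = 0 := by
    rw [← smul_pow, key, neg_pow, hTm, mul_zero]
  by_contra h
  apply hωm
  have hne : (a l) ^ m ≠ 0 := pow_ne_zero m h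
  calc ω ^ m = ((a l) ^ m)⁻¹ • ((a l) ^ m • ω ^ m) := (inv_smul_smul₀ hne _).symm
    _ = 0 := by rw [hzero, smul_zero]
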